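/- Let f_L, f_R : ℝ^d → ℝ^d (d ≥ 1) be C^1 maps that agree on the switching manifold Σ = {x ∈ ℝ^d : x_1 = 0}, and define f : ℝ^d → ℝ^d by f(x) = f_L(x) if x_1 ≤ 0 and f(x) = f_R(x) if x_1 ≥ 0. For x, v ∈ ℝ^d define C(x,v) = Df_L(x) if x_1 < 0, or if x_1 = 0 and v_1 < 0; and C(x,v) = Df_R(x) if x_1 > 0, or if x_1 = 0 and v_1 ≥ 0. Define h : ℝ^d × ℝ^d → ℝ^d × ℝ^d by h(x,v) = (f(x), C(x,v)v), and for n ≥ 1 define C_n(x,v) = C(h^{n−1}(x,v)) C(h^{n−2}(x,v)) ⋯ C(x,v). Then for every x ∈ ℝ^d, v ∈ ℝ^d, and n ≥ 1, f^n(x + δv) − f^n(x) = δ C_n(x,v) v + o(δ) as δ → 0^+; that is, lim_{δ → 0^+} ‖f^n(x + δv) − f^n(x) − δ C_n(x,v) v‖ / δ = 0. -/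

import Mathlib

open Metric Filter Asymptotics Topology

/-- The one-sided Jacobian `C(x,v)`: `DfL x` if `x₁ < 0`, or `x₁ = 0` and `v₁ < 0`;
`DfR x` if `x₁ > 0`, or `x₁ = 0` and `v₁ ≥ 0`. -/
noncomputable def Cmat {d : ℕ} (hd : 0 < d)
    (fL fR : EuclideanSpace ℝ (Fin d) → EuclideanSpace ℝ (Fin d))
    (x v : EuclideanSpace ℝ (Fin d)) :
    EuclideanSpace ℝ (Fin d) →L[ℝ] EuclideanSpace ℝ (Fin d) :=
  if x ⟨0, hd⟩ < 0 ∨ (x ⟨0, hd⟩ = 0 ∧ v ⟨0, hd⟩ < 0) then fderiv ℝ fL x else fderiv ℝ fR x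

/-- The tangent-bundle map `h(x,v) = (f(x), C(x,v) v)`. -/
noncomputable def hMap {d : ℕ} (hd : 0 < d)
    (fL fR f : EuclideanSpace ℝ (Fin d) → EuclideanSpace ℝ (Fin d))
    (p : EuclideanSpace ℝ (Fin d) × EuclideanSpace ℝ (Fin d)) :
    EuclideanSpace ℝ (Fin d) × EuclideanSpace ℝ (Fin d) :=
  (f p.1, Cmat hd fL fR p.1 p.2 p.2)

/-- The cocycle `C_n(x,v) = C(h^{n-1}(x,v)) ⋯ C(x,v)`, with `C_0 = I`. -/
noncomputable def Cn {d : ℕ} (hd : 0 < d)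
    (fL fR f : EuclideanSpace ℝ (Fin d) → EuclideanSpace ℝ (Fin d)) :
    ℕ → EuclideanSpace ℝ (Fin d) × EuclideanSpace ℝ (Fin d) →
      (EuclideanSpace ℝ (Fin d) →L[ℝ] EuclideanSpace ℝ (Fin d))
  | 0, _ => ContinuousLinearMap.id ℝ (EuclideanSpace ℝ (Fin d))
  | n + 1, p =>
      (Cmat hd fL fR ((hMap hd fL fR f)^[n] p).1 ((hMap hd fL fR f)^[n] p).2).comp
        (Cn hd fL fR f n p)

namespace Stmt6Aux

open Metric Filter Asymptotics Topology

lemma tends_delta : Tendsto (fun δ : ℝ => δ) (𝓝[>] (0:ℝ)) (𝓝 0) :=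
  tendsto_id.mono_left nhdsWithin_le_nhds

lemma expand {d : ℕ} (g : EuclideanSpace ℝ (Fin d) → EuclideanSpace ℝ (Fin d))
    (hg : ContDiff ℝ 1 g) (x w : EuclideanSpace ℝ (Fin d)) (r : ℝ → EuclideanSpace ℝ (Fin d))
    (hr : r =o[𝓝[>] (0:ℝ)] fun δ => δ) :
    (fun δ : ℝ => g (x + δ • w + r δ) - g x - δ • fderiv ℝ g x w)
      =o[𝓝[>] (0:ℝ)] fun δ => δ := by
  set l := 𝓝[>] (0:ℝ)
  have hder : HasFDerivAt g (fderiv ℝ g x) x := (hg.differentiable one_ne_zero x).hasFDerivAt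
  have ho : (fun u : EuclideanSpace ℝ (Fin d) => g (x + u) - g x - fderiv ℝ g x u)
      =o[𝓝 (0:EuclideanSpace ℝ (Fin d))] fun u => u :=
    hasFDerivAt_iff_isLittleO_nhds_zero.mp hder
  set u : ℝ → EuclideanSpace ℝ (Fin d) := fun δ => δ • w + r δ with hu
  have hr0 : Tendsto r l (𝓝 0) := hr.isBigO.trans_tendsto tends_delta
  have hu0 : Tendsto u l (𝓝 (0:EuclideanSpace ℝ (Fin d))) := by
    have := (tends_delta.smul_const w).add hr0
    simpa using this
  have h1 := ho.comp_tendsto hu0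
  have huO : u =O[l] fun δ => δ := by
    have h1 : (fun δ : ℝ => δ • w) =O[l] fun δ => δ := by
      rw [isBigO_iff]
      exact ⟨‖w‖, Eventually.of_forall fun δ => by
        simp [norm_smul, mul_comm]⟩
    exact h1.add hr.isBigO
  have h2 : (fun δ : ℝ => g (x + u δ) - g x - fderiv ℝ g x (u δ)) =o[l] fun δ => δ :=
    h1.trans_isBigO huO
  have h4 : (fun δ : ℝ => fderiv ℝ g x (r δ)) =o[l] fun δ => δ :=
    ((fderiv ℝ g x).isBigO_comp r l).trans_isLittleO hr
  have := h2.add h4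
  refine this.congr' (Eventually.of_forall fun δ => ?_) (Eventually.of_forall fun _ => rfl)
  simp only [hu, map_add, map_smul, add_assoc]
  abel

lemma jac_agree {d : ℕ} (hd : 0 < d)
    (fL fR : EuclideanSpace ℝ (Fin d) → EuclideanSpace ℝ (Fin d))
    (hfL : ContDiff ℝ 1 fL) (hfR : ContDiff ℝ 1 fR)
    (hagree : ∀ x : EuclideanSpace ℝ (Fin d), x ⟨0, hd⟩ = 0 → fL x = fR x)
    (x w : EuclideanSpace ℝ (Fin d)) (hx : x ⟨0, hd⟩ = 0) (hw : w ⟨0, hd⟩ = 0) :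
    fderiv ℝ fL x w = fderiv ℝ fR x w := by
  have hline : HasDerivAt (fun t : ℝ => x + t • w) w 0 := by
    simpa using ((hasDerivAt_id (0:ℝ)).smul_const w).const_add x
  have hcomp : ∀ (g : EuclideanSpace ℝ (Fin d) → EuclideanSpace ℝ (Fin d)), ContDiff ℝ 1 g →
      HasDerivAt (fun t : ℝ => g (x + t • w)) (fderiv ℝ g x w) 0 := by
    intro g hg
    have hder : HasFDerivAt g (fderiv ℝ g x) (x + (0:ℝ) • w) := by
      simpa using (hg.differentiable one_ne_zero x).hasFDerivAt
    exact hder.comp_hasDerivAt 0 hline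
  have hL := hcomp fL hfL
  have hR := hcomp fR hfR
  have heq : (fun t : ℝ => fL (x + t • w)) = fun t : ℝ => fR (x + t • w) := by
    funext t
    apply hagree
    simp [PiLp.add_apply, PiLp.smul_apply, hx, hw]
  rw [heq] at hL
  exact hL.unique hR

lemma Cmat_L {d : ℕ} (hd : 0 < d)
    (fL fR : EuclideanSpace ℝ (Fin d) → EuclideanSpace ℝ (Fin d))
    {x w : EuclideanSpace ℝ (Fin d)}
    (h : x ⟨0, hd⟩ < 0 ∨ (x ⟨0, hd⟩ = 0 ∧ w ⟨0, hd⟩ < 0)) :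
    Cmat hd fL fR x w = fderiv ℝ fL x := if_pos h

lemma Cmat_R {d : ℕ} (hd : 0 < d)
    (fL fR : EuclideanSpace ℝ (Fin d) → EuclideanSpace ℝ (Fin d))
    {x w : EuclideanSpace ℝ (Fin d)}
    (h : ¬(x ⟨0, hd⟩ < 0 ∨ (x ⟨0, hd⟩ = 0 ∧ w ⟨0, hd⟩ < 0))) :
    Cmat hd fL fR x w = fderiv ℝ fR x := if_neg h

lemma keyL {d : ℕ} (hd : 0 < d)
    (fL fR f : EuclideanSpace ℝ (Fin d) → EuclideanSpace ℝ (Fin d))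
    (hfL : ContDiff ℝ 1 fL)
    (hfdef : ∀ x : EuclideanSpace ℝ (Fin d),
      (x ⟨0, hd⟩ ≤ 0 → f x = fL x) ∧ (0 ≤ x ⟨0, hd⟩ → f x = fR x))
    (x w : EuclideanSpace ℝ (Fin d)) (r : ℝ → EuclideanSpace ℝ (Fin d))
    (hr : r =o[𝓝[>] (0:ℝ)] fun δ => δ)
    (hev : ∀ᶠ δ in 𝓝[>] (0:ℝ), (x + δ • w + r δ) ⟨0, hd⟩ ≤ 0)
    (hx : x ⟨0, hd⟩ ≤ 0)
    (hC : Cmat hd fL fR x w = fderiv ℝ fL x) :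
    (fun δ : ℝ => (f (x + δ • w + r δ) - f x - δ • (Cmat hd fL fR x w) w :
      EuclideanSpace ℝ (Fin d))) =o[𝓝[>] (0:ℝ)] fun δ => δ := by
  refine (expand fL hfL x w r hr).congr' ?_ (Eventually.of_forall fun _ => rfl)
  filter_upwards [hev] with δ hδ
  rw [(hfdef _).1 hδ, (hfdef x).1 hx, hC]

lemma keyR {d : ℕ} (hd : 0 < d)
    (fL fR f : EuclideanSpace ℝ (Fin d) → EuclideanSpace ℝ (Fin d))
    (hfR : ContDiff ℝ 1 fR)
    (hfdef : ∀ x : EuclideanSpace ℝ (Fin d),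
      (x ⟨0, hd⟩ ≤ 0 → f x = fL x) ∧ (0 ≤ x ⟨0, hd⟩ → f x = fR x))
    (x w : EuclideanSpace ℝ (Fin d)) (r : ℝ → EuclideanSpace ℝ (Fin d))
    (hr : r =o[𝓝[>] (0:ℝ)] fun δ => δ)
    (hev : ∀ᶠ δ in 𝓝[>] (0:ℝ), 0 ≤ (x + δ • w + r δ) ⟨0, hd⟩)
    (hx : 0 ≤ x ⟨0, hd⟩)
    (hC : Cmat hd fL fR x w = fderiv ℝ fR x) :
    (fun δ : ℝ => (f (x + δ • w + r δ) - f x - δ • (Cmat hd fL fR x w) w :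
      EuclideanSpace ℝ (Fin d))) =o[𝓝[>] (0:ℝ)] fun δ => δ := by
  refine (expand fR hfR x w r hr).congr' ?_ (Eventually.of_forall fun _ => rfl)
  filter_upwards [hev] with δ hδ
  rw [(hfdef _).2 hδ, (hfdef x).2 hx, hC]

lemma key {d : ℕ} (hd : 0 < d)
    (fL fR f : EuclideanSpace ℝ (Fin d) → EuclideanSpace ℝ (Fin d))
    (hfL : ContDiff ℝ 1 fL) (hfR : ContDiff ℝ 1 fR)
    (hagree : ∀ x : EuclideanSpace ℝ (Fin d), x ⟨0, hd⟩ = 0 → fL x = fR x)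
    (hfdef : ∀ x : EuclideanSpace ℝ (Fin d),
      (x ⟨0, hd⟩ ≤ 0 → f x = fL x) ∧ (0 ≤ x ⟨0, hd⟩ → f x = fR x))
    (x w : EuclideanSpace ℝ (Fin d)) (r : ℝ → EuclideanSpace ℝ (Fin d))
    (hr : r =o[𝓝[>] (0:ℝ)] fun δ => δ) :
    (fun δ : ℝ => (f (x + δ • w + r δ) - f x - δ • (Cmat hd fL fR x w) w :
      EuclideanSpace ℝ (Fin d))) =o[𝓝[>] (0:ℝ)] fun δ => δ := by
  set l := 𝓝[>] (0:ℝ) with hl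
  have hr0 : Tendsto r l (𝓝 0) := hr.isBigO.trans_tendsto tends_delta
  have hpt : Tendsto (fun δ : ℝ => x + δ • w + r δ) l (𝓝 x) := by
    have h0 : Tendsto (fun δ : ℝ => x + δ • w + r δ) l (𝓝 (x + (0:ℝ) • w + 0)) :=
      ((tendsto_const_nhds.add (tends_delta.smul_const w)).add hr0)
    simpa using h0
  have hcoord : Tendsto (fun δ : ℝ => (x + δ • w + r δ) ⟨0, hd⟩) l (𝓝 (x ⟨0, hd⟩)) := by
    have hc := ((EuclideanSpace.proj (𝕜 := ℝ) (⟨0, hd⟩ : Fin d)).continuous.tendsto x).comp hpt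
    exact hc.congr fun δ => rfl
  have hrc : (fun δ : ℝ => (r δ) ⟨0, hd⟩) =o[l] fun δ => δ := by
    have h1 := ((EuclideanSpace.proj (𝕜 := ℝ) (⟨0, hd⟩ : Fin d)).isBigO_comp r l).trans_isLittleO hr
    exact h1.congr' (Eventually.of_forall fun _ => rfl) (Eventually.of_forall fun _ => rfl)
  have hcoord_eq : x ⟨0, hd⟩ = 0 → ∀ δ : ℝ,
      (x + δ • w + r δ) ⟨0, hd⟩ = δ * w ⟨0, hd⟩ + (r δ) ⟨0, hd⟩ := by
    intro hx δ
    simp [PiLp.add_apply, PiLp.smul_apply, hx, smul_eq_mul]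
  rcases lt_trichotomy (x ⟨0, hd⟩) 0 with hx | hx | hx
  · -- strictly left
    have hev : ∀ᶠ δ in l, (x + δ • w + r δ) ⟨0, hd⟩ ≤ 0 :=
      (hcoord.eventually_lt_const hx).mono fun δ h => h.le
    exact keyL hd fL fR f hfL hfdef x w r hr hev hx.le (Cmat_L hd fL fR (Or.inl hx))
  · rcases lt_trichotomy (w ⟨0, hd⟩) 0 with hw | hw | hw
    · -- on switching manifold, moving left
      have hev : ∀ᶠ δ in l, (x + δ • w + r δ) ⟨0, hd⟩ ≤ 0 := by
        have h1 := hrc.def (by linarith : (0:ℝ) < -(w ⟨0, hd⟩)/2)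
        filter_upwards [h1, self_mem_nhdsWithin] with δ hδ1 hδ2
        have hδpos : (0:ℝ) < δ := hδ2
        have habs : |(r δ) ⟨0, hd⟩| ≤ -(w ⟨0, hd⟩)/2 * δ := by
          simpa [abs_of_pos hδpos, Real.norm_eq_abs] using hδ1
        rw [hcoord_eq hx δ]
        nlinarith [(abs_le.mp habs).2, mul_pos hδpos (by linarith : (0:ℝ) < -(w ⟨0, hd⟩))]
      exact keyL hd fL fR f hfL hfdef x w r hr hev hx.le
        (Cmat_L hd fL fR (Or.inr ⟨hx, hw⟩))
    · -- on switching manifold, tangent direction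
      have hC : Cmat hd fL fR x w = fderiv ℝ fR x := by
        refine Cmat_R hd fL fR ?_
        rintro (h | ⟨-, h⟩)
        · exact absurd hx h.ne
        · rw [hw] at h; exact lt_irrefl 0 h
      have hRex := expand fR hfR x w r hr
      have hLex := expand fL hfL x w r hr
      have hj := jac_agree hd fL fR hfL hfR hagree x w hx hw
      have hfx : fL x = fR x := hagree x hx
      have hdiff : (fun δ : ℝ => fL (x + δ • w + r δ) - fR (x + δ • w + r δ))
          =o[l] fun δ => δ := by
        refine (hLex.sub hRex).congr' (Eventually.of_forall fun δ => ?_)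
          (Eventually.of_forall fun _ => rfl)
        rw [hfx, hj]
        abel
      have hbound : ∀ δ : ℝ, ‖f (x + δ • w + r δ) - fR (x + δ • w + r δ)‖ ≤
          ‖fL (x + δ • w + r δ) - fR (x + δ • w + r δ)‖ := by
        intro δ
        rcases le_total ((x + δ • w + r δ) ⟨0, hd⟩) 0 with h | h
        · rw [(hfdef _).1 h]
        · rw [(hfdef _).2 h]
          simp
      have hfo : (fun δ : ℝ => f (x + δ • w + r δ) - fR (x + δ • w + r δ))
          =o[l] fun δ => δ :=
        (isBigO_of_le l hbound).trans_isLittleO hdiff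
      refine (hfo.add hRex).congr' (Eventually.of_forall fun δ => ?_)
        (Eventually.of_forall fun _ => rfl)
      rw [(hfdef x).2 hx.ge, hC]
      abel
    · -- on switching manifold, moving right
      have hev : ∀ᶠ δ in l, 0 ≤ (x + δ • w + r δ) ⟨0, hd⟩ := by
        have h1 := hrc.def (by linarith : (0:ℝ) < (w ⟨0, hd⟩)/2)
        filter_upwards [h1, self_mem_nhdsWithin] with δ hδ1 hδ2
        have hδpos : (0:ℝ) < δ := hδ2
        have habs : |(r δ) ⟨0, hd⟩| ≤ (w ⟨0, hd⟩)/2 * δ := by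
          simpa [abs_of_pos hδpos, Real.norm_eq_abs] using hδ1
        rw [hcoord_eq hx δ]
        nlinarith [(abs_le.mp habs).1, mul_pos hδpos hw]
      have hC : Cmat hd fL fR x w = fderiv ℝ fR x := by
        refine Cmat_R hd fL fR ?_
        rintro (h | ⟨-, h⟩)
        · exact absurd hx h.ne
        · exact absurd h (not_lt.mpr hw.le)
      exact keyR hd fL fR f hfR hfdef x w r hr hev hx.ge hC
  · -- strictly right
    have hev : ∀ᶠ δ in l, 0 ≤ (x + δ • w + r δ) ⟨0, hd⟩ :=
      (hcoord.eventually_const_lt hx).mono fun δ h => h.le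
    refine keyR hd fL fR f hfR hfdef x w r hr hev hx.le ?_
    refine Cmat_R hd fL fR ?_
    rintro (h | ⟨h, -⟩)
    · exact absurd hx (not_lt.mpr h.le)
    · exact absurd hx (by rw [h]; exact lt_irrefl 0)

lemma hIter {d : ℕ} (hd : 0 < d)
    (fL fR f : EuclideanSpace ℝ (Fin d) → EuclideanSpace ℝ (Fin d))
    (n : ℕ) (p : EuclideanSpace ℝ (Fin d) × EuclideanSpace ℝ (Fin d)) :
    (hMap hd fL fR f)^[n] p = (f^[n] p.1, ((Cn hd fL fR f n p) p.2 :
      EuclideanSpace ℝ (Fin d))) := by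
  induction n with
  | zero => rfl
  | succ n ih =>
    rw [Function.iterate_succ_apply' (hMap hd fL fR f) n p, ih]
    refine Prod.ext ?_ ?_
    · show f (f^[n] p.1) = f^[n + 1] p.1
      rw [Function.iterate_succ_apply']
    · show (Cmat hd fL fR (f^[n] p.1) ((Cn hd fL fR f n p) p.2)) ((Cn hd fL fR f n p) p.2)
        = (Cn hd fL fR f (n + 1) p) p.2
      simp only [Cn, ContinuousLinearMap.comp_apply, ih]

lemma main {d : ℕ} (hd : 0 < d)
    (fL fR f : EuclideanSpace ℝ (Fin d) → EuclideanSpace ℝ (Fin d))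
    (hfL : ContDiff ℝ 1 fL) (hfR : ContDiff ℝ 1 fR)
    (hagree : ∀ x : EuclideanSpace ℝ (Fin d), x ⟨0, hd⟩ = 0 → fL x = fR x)
    (hfdef : ∀ x : EuclideanSpace ℝ (Fin d),
      (x ⟨0, hd⟩ ≤ 0 → f x = fL x) ∧ (0 ≤ x ⟨0, hd⟩ → f x = fR x))
    (x v : EuclideanSpace ℝ (Fin d)) (n : ℕ) :
    (fun δ : ℝ => (f^[n] (x + δ • v) - f^[n] x - δ • (Cn hd fL fR f n (x, v)) v :
      EuclideanSpace ℝ (Fin d))) =o[𝓝[>] (0:ℝ)] fun δ => δ := by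
  induction n with
  | zero =>
    have h0 : (fun δ : ℝ => (f^[0] (x + δ • v) - f^[0] x - δ • (Cn hd fL fR f 0 (x, v)) v :
        EuclideanSpace ℝ (Fin d))) = fun _ => (0 : EuclideanSpace ℝ (Fin d)) := by
      funext δ
      show x + δ • v - x - δ • v = (0 : EuclideanSpace ℝ (Fin d))
      abel
    rw [h0]
    exact isLittleO_zero _ _
  | succ n ih =>
    have hkey := key hd fL fR f hfL hfR hagree hfdef (f^[n] x)
      ((Cn hd fL fR f n (x, v)) v)
      (fun δ => f^[n] (x + δ • v) - f^[n] x - δ • (Cn hd fL fR f n (x, v)) v) ih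
    refine hkey.congr' (Eventually.of_forall fun δ => ?_) (Eventually.of_forall fun _ => rfl)
    beta_reduce
    have hpt : f^[n] x + δ • ((Cn hd fL fR f n (x, v)) v) +
        (f^[n] (x + δ • v) - f^[n] x - δ • (Cn hd fL fR f n (x, v)) v)
        = f^[n] (x + δ • v) := by abel
    rw [hpt]
    have h := hIter hd fL fR f n (x, v)
    have hCn : (Cmat hd fL fR (f^[n] x) ((Cn hd fL fR f n (x, v)) v))
        ((Cn hd fL fR f n (x, v)) v) = (Cn hd fL fR f (n+1) (x, v)) v := by
      simp only [Cn, ContinuousLinearMap.comp_apply, h]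
    rw [hCn, Function.iterate_succ_apply' f n x, Function.iterate_succ_apply' f n (x + δ • v)]

end Stmt6Aux

theorem stmt6 {d : ℕ} (hd : 0 < d)
    (fL fR f : EuclideanSpace ℝ (Fin d) → EuclideanSpace ℝ (Fin d))
    (hfL : ContDiff ℝ 1 fL) (hfR : ContDiff ℝ 1 fR)
    (hagree : ∀ x : EuclideanSpace ℝ (Fin d), x ⟨0, hd⟩ = 0 → fL x = fR x)
    (hfdef : ∀ x : EuclideanSpace ℝ (Fin d),
      (x ⟨0, hd⟩ ≤ 0 → f x = fL x) ∧ (0 ≤ x ⟨0, hd⟩ → f x = fR x))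
    (x v : EuclideanSpace ℝ (Fin d)) (n : ℕ) (hn : 1 ≤ n) :
    Tendsto (fun δ : ℝ => ‖f^[n] (x + δ • v) - f^[n] x - δ • (Cn hd fL fR f n (x, v)) v‖ / δ)
      (nhdsWithin 0 (Set.Ioi 0)) (nhds 0) := by
  have h := Stmt6Aux.main hd fL fR f hfL hfR hagree hfdef x v n
  exact h.norm_left.tendsto_div_nhds_zero
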